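/- arXiv:2008.04841 — 2 statements merged into one kernel-verified Lean document; each statement's English description precedes it below -/
import Mathlib

section
/- Congruence for Lucas numbers: for integers N ≥ 2 and n with n ≥ 2N, letting d = ⌊⌊n/N⌋/2⌋, we have L_n ≡ (-1)^{(N+1)(d+2)} L_{n-2dN} (mod L_N). -/
def lucas : ℕ → ℕ
  | 0 => 2
  | 1 => 1
  | n + 2 => lucas (n + 1) + lucas n

lemma lucasZ (n : ℕ) : (lucas (n + 2) : ℤ) = lucas (n + 1) + lucas n := by
  simp [lucas]

lemma lucasC : ∀ N : ℕ, (lucas N : ℤ) * lucas (N + 2) - (lucas (N + 1))^2 = 5 * (-1)^N := by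
  intro N
  induction N with
  | zero => simp [lucas]
  | succ k ih =>
      rw [lucasZ] at ih
      rw [show k + 1 + 2 = (k + 1) + 2 from rfl, lucasZ,
        show k + 1 + 1 = k + 2 from by ring, lucasZ]
      linear_combination -ih

lemma lucasAB : ∀ N : ℕ,
    (lucas (2 * N) : ℤ) = (lucas N)^2 - 2 * (-1)^N ∧
    (lucas (2 * N + 1) : ℤ) = lucas (N + 1) * lucas N - (-1)^N := by
  intro N
  induction N with
  | zero => constructor <;> simp [lucas]
  | succ k ih =>
      obtain ⟨hA, hB⟩ := ih
      have hC2 : (lucas k : ℤ) * (lucas (k + 1) + lucas k) - (lucas (k + 1))^2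
          = 5 * (-1)^k := by
        rw [← lucasZ k]; exact lucasC k
      constructor
      · rw [show 2 * (k + 1) = 2 * k + 2 from by ring, lucasZ]
        linear_combination hA + hB + hC2
      · rw [show 2 * (k + 1) + 1 = (2 * k + 1) + 2 from by ring, lucasZ,
          show 2 * k + 1 + 1 = 2 * k + 2 from by ring, lucasZ,
          show k + 1 + 1 = k + 2 from by ring, lucasZ]
        linear_combination 2 * hB + hA + hC2

lemma lucas_key (N : ℕ) : ∀ m : ℕ,
    (lucas N : ℤ) ∣ (lucas (m + 2 * N) : ℤ) + (-1)^N * lucas m := by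
  intro m
  induction m using Nat.strong_induction_on with
  | _ m ih =>
      match m with
      | 0 =>
          obtain ⟨hA, _⟩ := lucasAB N
          rw [zero_add, hA, show (lucas 0 : ℤ) = 2 from by simp [lucas]]
          exact ⟨lucas N, by ring⟩
      | 1 =>
          obtain ⟨_, hB⟩ := lucasAB N
          rw [show 1 + 2 * N = 2 * N + 1 from by ring, hB,
            show (lucas 1 : ℤ) = 1 from by simp [lucas]]
          exact ⟨lucas (N + 1), by ring⟩
      | (k + 2) =>
          have h1 := ih (k + 1) (by omega)
          have h2 := ih k (by omega)
          rw [show k + 2 + 2 * N = (k + 2 * N) + 2 from by ring, lucasZ, lucasZ k,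
            show k + 2 * N + 1 = k + 1 + 2 * N from by ring]
          have := dvd_add h1 h2
          convert this using 1
          · rfl
          ring

lemma lucas_iter (N : ℕ) : ∀ d m : ℕ,
    (lucas (m + 2 * d * N) : ℤ) ≡ (-1)^((N + 1) * d) * lucas m [ZMOD (lucas N : ℤ)] := by
  intro d
  induction d with
  | zero => intro m; simp [Int.ModEq]
  | succ k ih =>
      intro m
      have h := ih m
      have hkey := lucas_key N (m + 2 * k * N)
      rw [show m + 2 * (k + 1) * N = (m + 2 * k * N) + 2 * N from by ring]
      have step : (lucas ((m + 2 * k * N) + 2 * N) : ℤ) ≡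
          (-1 : ℤ)^(N + 1) * lucas (m + 2 * k * N) [ZMOD (lucas N : ℤ)] := by
        rw [Int.modEq_iff_dvd]
        have e : (-1 : ℤ)^(N + 1) * lucas (m + 2 * k * N) - lucas (m + 2 * k * N + 2 * N) =
            -((lucas (m + 2 * k * N + 2 * N) : ℤ) + (-1)^N * lucas (m + 2 * k * N)) := by
          rw [pow_succ]; ring
        rw [e]
        exact dvd_neg.mpr hkey
      have h2 : (-1 : ℤ)^(N + 1) * lucas (m + 2 * k * N) ≡
          (-1 : ℤ)^(N + 1) * ((-1)^((N + 1) * k) * lucas m) [ZMOD (lucas N : ℤ)] :=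
        h.mul_left _
      calc (lucas (m + 2 * k * N + 2 * N) : ℤ)
          ≡ (-1 : ℤ)^(N + 1) * ((-1)^((N + 1) * k) * lucas m) [ZMOD (lucas N : ℤ)] :=
            step.trans h2
        _ = (-1 : ℤ)^((N + 1) * (k + 1)) * lucas m := by
            rw [mul_add, mul_one, pow_add]; ring

theorem lucas_congruence (N n : ℕ) (hN : 2 ≤ N) (hn : 2 * N ≤ n) :
    (lucas n : ℤ) ≡ (-1 : ℤ) ^ ((N + 1) * (n / N / 2 + 2)) * lucas (n - 2 * (n / N / 2) * N)
      [ZMOD (lucas N : ℤ)] := by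
  set d := n / N / 2 with hd
  have hle : 2 * d * N ≤ n := by
    have h1 : d * 2 ≤ n / N := Nat.div_mul_le_self (n / N) 2
    have h2 : (n / N) * N ≤ n := Nat.div_mul_le_self n N
    calc 2 * d * N = (d * 2) * N := by ring
      _ ≤ (n / N) * N := Nat.mul_le_mul_right N h1
      _ ≤ n := h2
  have em : (n - 2 * d * N) + 2 * d * N = n := by omega
  have h := lucas_iter N d (n - 2 * d * N)
  rw [em] at h
  have epow : (-1 : ℤ)^((N + 1) * (d + 2)) = (-1 : ℤ)^((N + 1) * d) := by
    rw [mul_add, pow_add, mul_comm (N + 1) 2, pow_mul]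
    norm_num
  rw [epow]
  exact h
end

section
/- Lacunary recurrence for Gibonacci sequences: let G_0, G_1 ∈ ℤ and G_n = G_{n-1}+G_{n-2}. For integers N ≥ 2 and n ≥ 2N, with d = ⌊⌊n/N⌋/2⌋, G_n = L_N * Σ_{i=1}^{d} (-1)^{(N+1)(i+1)} G_{n-(2i-1)N} + (-1)^{(N+1)(d+2)} G_{n-2dN}. -/
lemma lucasZ_s17 : ∀ N : ℕ, (lucas (N + 1) : ℤ) = Nat.fib (N + 2) + Nat.fib N := by
  intro N
  induction N using Nat.twoStepInduction with
  | zero => decide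
  | one => decide
  | more n ih1 ih2 =>
    have h : lucas (n + 3) = lucas (n + 2) + lucas (n + 1) := rfl
    have f1 : Nat.fib (n + 4) = Nat.fib (n + 2) + Nat.fib (n + 3) := Nat.fib_add_two
    have f2 : Nat.fib (n + 2) = Nat.fib n + Nat.fib (n + 1) := Nat.fib_add_two
    push_cast [h, f1, f2] at *
    linarith

lemma fibG (G : ℕ → ℤ) (hG : ∀ n, G (n + 2) = G (n + 1) + G n) (m : ℕ) :
    ∀ k, G (m + k + 1) = Nat.fib (k + 1) * G (m + 1) + Nat.fib k * G m := by
  intro k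
  induction k using Nat.twoStepInduction with
  | zero => simp
  | one =>
    have := hG m
    simp [Nat.fib_add_two, show m + 1 + 1 = m + 2 from rfl] at *
    linarith [hG m]
  | more k ih1 ih2 =>
    have h : G (m + (k + 2) + 1) = G (m + (k + 1) + 1) + G (m + k + 1) := by
      have h2 := hG (m + k + 1)
      have e : m + k + 1 + 2 = m + (k + 2) + 1 := by omega
      have e2 : m + k + 1 + 1 = m + (k + 1) + 1 := by omega
      rw [e, e2] at h2
      exact h2
    have f1 : Nat.fib (k + 3) = Nat.fib (k + 1) + Nat.fib (k + 2) := Nat.fib_add_two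
    have f2 : Nat.fib (k + 2) = Nat.fib k + Nat.fib (k + 1) := Nat.fib_add_two
    rw [h, ih1, ih2]
    push_cast [f1, f2]
    ring

lemma cassini : ∀ M : ℕ,
    ((Nat.fib (M + 1) : ℤ)) ^ 2 - Nat.fib (M + 1) * Nat.fib M - (Nat.fib M : ℤ) ^ 2 = (-1) ^ M := by
  intro M
  induction M with
  | zero => decide
  | succ n ih =>
    have f : Nat.fib (n + 2) = Nat.fib n + Nat.fib (n + 1) := Nat.fib_add_two
    push_cast [f]
    linear_combination -ih

lemma gib_key (G : ℕ → ℤ) (hG : ∀ n, G (n + 2) = G (n + 1) + G n) (N m : ℕ) (hN : 1 ≤ N) :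
    G (m + 2 * N) = (lucas N : ℤ) * G (m + N) + (-1) ^ (N + 1) * G m := by
  obtain ⟨M, rfl⟩ : ∃ M, N = M + 1 := ⟨N - 1, by omega⟩
  have h1 := fibG G hG m (2 * M + 1)
  have h2 := fibG G hG m M
  have e1 : m + 2 * (M + 1) = m + (2 * M + 1) + 1 := by ring
  have e2 : m + (M + 1) = m + M + 1 := by ring
  rw [e1, e2, h1, h2]
  have fa1 : Nat.fib (M + (M + 1) + 1) = Nat.fib M * Nat.fib (M + 1) + Nat.fib (M + 1) * Nat.fib (M + 2) :=
    Nat.fib_add M (M + 1)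
  have fa2 : Nat.fib (M + M + 1) = Nat.fib M * Nat.fib M + Nat.fib (M + 1) * Nat.fib (M + 1) :=
    Nat.fib_add M M
  have e3 : M + (M + 1) + 1 = 2 * M + 2 := by ring
  have e4 : M + M + 1 = 2 * M + 1 := by ring
  rw [e3] at fa1
  rw [e4] at fa2
  have hl := lucasZ_s17 M
  have hc := cassini M
  have hf1 : (Nat.fib (2 * M + 2) : ℤ) = (lucas (M + 1) : ℤ) * Nat.fib (M + 1) := by
    push_cast [fa1]
    linear_combination -(Nat.fib (M + 1) : ℤ) * hl
  have hf2 : (Nat.fib (2 * M + 1) : ℤ) = (lucas (M + 1) : ℤ) * Nat.fib M + (-1) ^ M := by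
    push_cast [fa2]
    have f2 : (Nat.fib (M + 2) : ℤ) = Nat.fib M + Nat.fib (M + 1) := by
      exact_mod_cast (Nat.fib_add_two : Nat.fib (M + 2) = Nat.fib M + Nat.fib (M + 1))
    linear_combination hc - (Nat.fib M : ℤ) * hl - (Nat.fib M : ℤ) * f2
  rw [hf1, hf2]
  ring

lemma gib_aux (G : ℕ → ℤ) (hG : ∀ n, G (n + 2) = G (n + 1) + G n) (N n : ℕ) (hN : 1 ≤ N) :
    ∀ k, 1 ≤ k → 2 * k * N ≤ n →
      G n = (lucas N : ℤ) *
          ∑ i ∈ Finset.Icc 1 k, (-1 : ℤ) ^ ((N + 1) * (i + 1)) * G (n - (2 * i - 1) * N) +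
        (-1 : ℤ) ^ ((N + 1) * (k + 2)) * G (n - 2 * k * N) := by
  intro k
  induction k with
  | zero => omega
  | succ k ih =>
    intro _ hkn
    have e0 : 2 * (k + 1) * N = 2 * k * N + 2 * N := by ring
    rcases Nat.eq_zero_or_pos k with hk0 | hk1
    · subst hk0
      have h2n : 2 * N ≤ n := by omega
      have hkey := gib_key G hG N (n - 2 * N) hN
      have i0 : n - 2 * N + 2 * N = n := by omega
      have i1 : n - 2 * N + N = n - (2 * 1 - 1) * N := by omega
      have i2 : n - 2 * 1 * N = n - 2 * N := by omega
      rw [i0, i1] at hkey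
      rw [Finset.Icc_self, Finset.sum_singleton, i2]
      simp only [pow_mul] at *
      have hs2 : ((-1 : ℤ) ^ (N + 1)) ^ 2 = 1 := by
        rw [← pow_mul, mul_comm, pow_mul]
        norm_num
      have hs3 : ((-1 : ℤ) ^ (N + 1)) ^ (1 + 2) = (-1 : ℤ) ^ (N + 1) := by
        rw [show (1 + 2 : ℕ) = 2 + 1 from rfl, pow_succ, hs2, one_mul]
      rw [hs2, hs3, one_mul]
      exact hkey
    · have hk : 2 * k * N ≤ n := by
        have : 2 * k * N ≤ 2 * (k + 1) * N := Nat.mul_le_mul_right N (by omega)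
        omega
      have hIH := ih hk1 hk
      have hkey := gib_key G hG N (n - 2 * (k + 1) * N) hN
      have i0 : n - 2 * (k + 1) * N + 2 * N = n - 2 * k * N := by omega
      have e1 : (2 * (k + 1) - 1) * N = 2 * k * N + N := by
        have : 2 * (k + 1) - 1 = 2 * k + 1 := by omega
        rw [this]; ring
      have i1 : n - 2 * (k + 1) * N + N = n - (2 * (k + 1) - 1) * N := by omega
      rw [i0, i1] at hkey
      rw [Finset.sum_Icc_succ_top (by omega : 1 ≤ k + 1)]
      simp only [pow_mul] at *
      rw [hIH, hkey]
      ring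

theorem gibonacci_lacunary (G : ℕ → ℤ) (hG : ∀ n, G (n + 2) = G (n + 1) + G n)
    (N n : ℕ) (hN : 2 ≤ N) (hn : 2 * N ≤ n) :
    G n =
      (lucas N : ℤ) *
          ∑ i ∈ Finset.Icc 1 (n / N / 2),
            (-1 : ℤ) ^ ((N + 1) * (i + 1)) * G (n - (2 * i - 1) * N) +
        (-1 : ℤ) ^ ((N + 1) * (n / N / 2 + 2)) * G (n - 2 * (n / N / 2) * N) := by
  have hd : n / N / 2 = n / (N * 2) := Nat.div_div_eq_div_mul n N 2
  have hd1 : 1 ≤ n / N / 2 := by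
    rw [hd]
    rw [Nat.le_div_iff_mul_le (by omega)]
    omega
  have hdn : 2 * (n / N / 2) * N ≤ n := by
    rw [hd]
    have := Nat.div_mul_le_self n (N * 2)
    calc 2 * (n / (N * 2)) * N = n / (N * 2) * (N * 2) := by ring
      _ ≤ n := this
  exact gib_aux G hG N n (by omega) (n / N / 2) hd1 hdn
end
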